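/- Fix σ² > 0, P_J ≥ 0, P_A > 0, and a positive integer N. For each positive integer W, define the total detection error e_W(t) = Γ(WN, WN·t/μ₀)/Γ(WN) + 1 − Γ(WN, WN·t/μ₁)/Γ(WN), where μ₀ = σ² + P_J and μ₁ = σ² + P_J + P_A. Then the threshold t* = μ₀·μ₁·ln(μ₁/μ₀)/P_A is a stationary point of e_W for every W; i.e., the minimizing threshold is independent of W. -/

import Mathlib

open Real Set MeasureTheory

/-- Upper incomplete Gamma function `Γ(n, x) = ∫ₓ^∞ e^{-s} s^{n-1} ds`. -/
noncomputable def uiGamma (n : ℕ) (x : ℝ) : ℝ :=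
  ∫ s in Set.Ioi x, Real.exp (-s) * s ^ (n - 1)

/-- The threshold `t* = μ₀ μ₁ ln(μ₁/μ₀)/P_A` is a stationary point of the total
detection error `e_W(t)` for every number of Wardens `W`: the minimizing
threshold is independent of `W`. -/
lemma f_cont (n : ℕ) : Continuous (fun s : ℝ => Real.exp (-s) * s ^ (n - 1)) := by
  continuity

lemma f_integrable (n : ℕ) (hn : 1 ≤ n) :
    IntegrableOn (fun s : ℝ => Real.exp (-s) * s ^ (n - 1)) (Ioi 0) := by
  have h := Real.GammaIntegral_convergent (s := (n : ℝ)) (by exact_mod_cast hn.trans_lt' zero_lt_one)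
  refine h.congr_fun (fun s hs => ?_) measurableSet_Ioi
  rw [show (n : ℝ) - 1 = ((n - 1 : ℕ) : ℝ) by push_cast [hn]; ring]
  simp only [Real.rpow_natCast]

lemma uiGamma_eq (n : ℕ) (hn : 1 ≤ n) (y : ℝ) (hy : 0 < y) :
    uiGamma n y = uiGamma n 0 - ∫ s in (0:ℝ)..y, Real.exp (-s) * s ^ (n - 1) := by
  have hint := f_integrable n hn
  rw [intervalIntegral.integral_of_le hy.le, eq_sub_iff_add_eq, add_comm]
  unfold uiGamma
  rw [← MeasureTheory.setIntegral_union (Set.Ioc_disjoint_Ioi le_rfl) measurableSet_Ioi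
      (hint.mono_set Ioc_subset_Ioi_self) (hint.mono_set (Ioi_subset_Ioi hy.le)),
    Ioc_union_Ioi_eq_Ioi hy.le]

lemma uiGamma_hasDerivAt (n : ℕ) (hn : 1 ≤ n) (x : ℝ) (hx : 0 < x) :
    HasDerivAt (uiGamma n) (-(Real.exp (-x) * x ^ (n - 1))) x := by
  have hii : IntervalIntegrable (fun s : ℝ => Real.exp (-s) * s ^ (n - 1)) volume 0 x := by
    rw [intervalIntegrable_iff, uIoc_of_le hx.le]
    exact (f_integrable n hn).mono_set Ioc_subset_Ioi_self
  have hFT : HasDerivAt (fun y => ∫ s in (0:ℝ)..y, Real.exp (-s) * s ^ (n - 1))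
      (Real.exp (-x) * x ^ (n - 1)) x :=
    intervalIntegral.integral_hasDerivAt_right hii
      (f_cont n).aestronglyMeasurable.stronglyMeasurableAtFilter (f_cont n).continuousAt
  have h2 : HasDerivAt (fun y => uiGamma n 0 - ∫ s in (0:ℝ)..y, Real.exp (-s) * s ^ (n - 1))
      (-(Real.exp (-x) * x ^ (n - 1))) x := by
    exact ((hasDerivAt_const x (uiGamma n 0)).sub hFT).congr_deriv (by ring)
  refine h2.congr_of_eventuallyEq ?_
  filter_upwards [eventually_gt_nhds hx] with y hy
  exact uiGamma_eq n hn y hy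

theorem optimal_threshold_independent_of_W
    (σ2 PJ PA : ℝ) (hσ : 0 < σ2) (hPJ : 0 ≤ PJ) (hPA : 0 < PA)
    (N : ℕ) (hN : 0 < N)
    (μ₀ μ₁ : ℝ) (hμ0 : μ₀ = σ2 + PJ) (hμ1 : μ₁ = σ2 + PJ + PA)
    (e : ℕ → ℝ → ℝ)
    (he : ∀ W t, e W t =
        uiGamma (W * N) ((W * N : ℕ) * t / μ₀) / Real.Gamma (W * N)
        + 1 - uiGamma (W * N) ((W * N : ℕ) * t / μ₁) / Real.Gamma (W * N)) :
    ∀ W : ℕ, 0 < W →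
      deriv (e W) (μ₀ * μ₁ * Real.log (μ₁ / μ₀) / PA) = 0 := by
  intro W hW
  set M : ℕ := W * N with hM
  have hM1 : 1 ≤ M := Nat.one_le_iff_ne_zero.2 (Nat.mul_ne_zero hW.ne' hN.ne')
  have h0 : 0 < μ₀ := by rw [hμ0]; linarith
  have h01 : μ₀ < μ₁ := by rw [hμ0, hμ1]; linarith
  have h1 : 0 < μ₁ := h0.trans h01
  have hlog : 0 < Real.log (μ₁ / μ₀) :=
    Real.log_pos ((one_lt_div h0).2 h01)
  obtain ⟨L, hL⟩ : ∃ L, L = Real.log (μ₁ / μ₀) := ⟨_, rfl⟩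
  rw [← hL] at hlog ⊢
  obtain ⟨t, ht⟩ : ∃ t, t = μ₀ * μ₁ * L / PA := ⟨_, rfl⟩
  rw [← ht]
  have htpos : 0 < t := by rw [ht]; positivity
  have hMpos : (0:ℝ) < (M:ℝ) := by exact_mod_cast hM1.trans_lt' zero_lt_one
  obtain ⟨c₀, hc0⟩ : ∃ c, c = (M:ℝ) / μ₀ := ⟨_, rfl⟩
  obtain ⟨c₁, hc1⟩ : ∃ c, c = (M:ℝ) / μ₁ := ⟨_, rfl⟩
  have hc0pos : 0 < c₀ := by rw [hc0]; positivity
  have hc1pos : 0 < c₁ := by rw [hc1]; positivity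
  have heW : e W = fun s => uiGamma M (c₀ * s) / Real.Gamma M
      + 1 - uiGamma M (c₁ * s) / Real.Gamma M := by
    funext s
    rw [he W s, hc0, hc1, hM]
    push_cast
    ring
  have hd0 : HasDerivAt (fun s => uiGamma M (c₀ * s))
      (-(Real.exp (-(c₀ * t)) * (c₀ * t) ^ (M - 1)) * c₀) t := by
    have := (uiGamma_hasDerivAt M hM1 (c₀ * t) (by positivity)).comp t
      ((hasDerivAt_id t).const_mul c₀)
    exact this.congr_deriv (by ring)
  have hd1 : HasDerivAt (fun s => uiGamma M (c₁ * s))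
      (-(Real.exp (-(c₁ * t)) * (c₁ * t) ^ (M - 1)) * c₁) t := by
    have := (uiGamma_hasDerivAt M hM1 (c₁ * t) (by positivity)).comp t
      ((hasDerivAt_id t).const_mul c₁)
    exact this.congr_deriv (by ring)
  have hD : HasDerivAt (e W)
      ((-(Real.exp (-(c₀ * t)) * (c₀ * t) ^ (M - 1)) * c₀) / Real.Gamma M
       - (-(Real.exp (-(c₁ * t)) * (c₁ * t) ^ (M - 1)) * c₁) / Real.Gamma M) t := by
    rw [heW]
    exact ((hd0.div_const _).add_const 1).sub (hd1.div_const _)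
  rw [hD.deriv]
  have h0' : μ₀ ≠ 0 := h0.ne'
  have h1' : μ₁ ≠ 0 := h1.ne'
  have hPA' : PA ≠ 0 := hPA.ne'
  have hM' : (M:ℝ) ≠ 0 := hMpos.ne'
  have key : Real.exp (-(c₀ * t)) * c₀ ^ M = Real.exp (-(c₁ * t)) * c₁ ^ M := by
    have e0 : c₀ ^ M = Real.exp ((M:ℝ) * Real.log c₀) := by
      rw [Real.exp_nat_mul, Real.exp_log hc0pos]
    have e1 : c₁ ^ M = Real.exp ((M:ℝ) * Real.log c₁) := by
      rw [Real.exp_nat_mul, Real.exp_log hc1pos]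
    rw [e0, e1, ← Real.exp_add, ← Real.exp_add]
    congr 1
    have hratio : Real.log c₀ - Real.log c₁ = L := by
      rw [hL]
      rw [← Real.log_div hc0pos.ne' hc1pos.ne']
      congr 1
      rw [hc0, hc1, div_div_div_comm, div_self hM', one_div_div]
    have harith : (c₀ - c₁) * t = (M:ℝ) * L := by
      have hdiff : μ₁ - μ₀ = PA := by rw [hμ0, hμ1]; ring
      rw [hc0, hc1, ht]
      field_simp
      linear_combination hdiff
    nlinarith [hratio, harith]
  have hpow : ∀ c : ℝ, 0 < c → (c * t) ^ (M - 1) * c = c ^ M * t ^ (M - 1) := by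
    intro c hc
    have hcM : c ^ M = c ^ (M - 1) * c := by
      rw [← pow_succ, Nat.sub_add_cancel hM1]
    rw [mul_pow, hcM]
    ring
  have : Real.exp (-(c₀ * t)) * (c₀ * t) ^ (M - 1) * c₀
      = Real.exp (-(c₁ * t)) * (c₁ * t) ^ (M - 1) * c₁ := by
    rw [mul_assoc, mul_assoc, hpow c₀ hc0pos, hpow c₁ hc1pos, ← mul_assoc, ← mul_assoc,
      key]
  rw [sub_eq_zero]
  congr 1
  linarith [this]
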